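/- The F-vector space V₂ of finite type invariants of degree ≤ 2 has dimension 6. -/

import Mathlib

/-- Letters are indexed by natural numbers; a signed letter carries a sign
(`true` = `+`, `false` = `−`). -/
abbrev Letter : Type := ℕ × Bool

/-- A signed word: every entry occurs exactly twice, and the two occurrences of
any letter carry the same sign. -/
def IsSignedWord (w : List Letter) : Prop :=
  ∀ p ∈ w, w.count p = 2 ∧ ∀ q ∈ w, q.1 = p.1 → q.2 = p.2

/-- Signed words (concrete representatives; isomorphism is subsumed by cyclic
equivalence below). -/
def SignedWord : Type := {w : List Letter // IsSignedWord w}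

/-- The set of letters occurring in a list of signed letters. -/
def lettersL (w : List Letter) : Finset ℕ := (w.map Prod.fst).toFinset

/-- The set of letters of a signed word. -/
def SignedWord.letters (w : SignedWord) : Finset ℕ := lettersL w.1

/-- The number of (distinct) letters of a signed word. -/
def SignedWord.numLetters (w : SignedWord) : ℕ := w.letters.card

theorem isSignedWord_filter (q : ℕ → Bool) {w : List Letter} (hw : IsSignedWord w) :
    IsSignedWord (w.filter fun p => q p.1) := by
  intro p hp
  rw [List.mem_filter] at hp
  refine ⟨?_, fun r hr => (hw p hp.1).2 r (List.mem_filter.mp hr).1⟩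
  rw [List.count_filter (p := fun r : Letter => q r.1) hp.2]
  exact (hw p hp.1).1

/-- Delete both occurrences of every letter of `T` from `w`. -/
def SignedWord.delete (w : SignedWord) (T : Finset ℕ) : SignedWord :=
  ⟨w.1.filter fun p => decide (p.1 ∉ T), isSignedWord_filter (fun a => decide (a ∉ T)) w.2⟩

/-- The induced signed subword of `w` on a set `U` of letters. -/
def SignedWord.restrict (w : SignedWord) (U : Finset ℕ) : SignedWord :=
  ⟨w.1.filter fun p => decide (p.1 ∈ U), isSignedWord_filter (fun a => decide (a ∈ U)) w.2⟩

/-- Sign-preserving relabeling of letters. -/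
def Iso (w w' : List Letter) : Prop :=
  ∃ f : ℕ ≃ ℕ, w' = w.map fun p => (f p.1, p.2)

/-- The basic move `A^ε x A^ε y ↦ x A^(−ε) y A^(−ε)`. -/
def Move (w w' : List Letter) : Prop :=
  ∃ (a : ℕ) (s : Bool) (x y : List Letter),
    w = (a, s) :: (x ++ (a, s) :: y) ∧ w' = x ++ (a, !s) :: (y ++ [(a, !s)])

/-- Cyclic equivalence of signed words: the equivalence relation generated by
isomorphism together with the basic move. -/
def CyclicEquivL : List Letter → List Letter → Prop :=
  Relation.EqvGen fun w w' => Iso w w' ∨ Move w w'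

/-- Cyclic equivalence of signed words. -/
def SignedWord.CyclicEquiv (w w' : SignedWord) : Prop := CyclicEquivL w.1 w'.1

/-- A cyclic equivalence invariant with values in `F`. -/
def WordInvariant (F : Type*) [Field F] (v : SignedWord → F) : Prop :=
  ∀ w w' : SignedWord, w.CyclicEquiv w' → v w = v w'

/-- The prolongation of `v` to the singular signed word `(w, S)` (the letters of
`S` being declared singular), given by inclusion–exclusion. -/
def prolong (F : Type*) [Field F] (v : SignedWord → F) (w : SignedWord) (S : Finset ℕ) : F :=
  ∑ T ∈ S.powerset, (-1 : F) ^ T.card * v (w.delete T)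

/-- `v` is a finite type invariant of degree ≤ `n`: it is a cyclic equivalence
invariant whose prolongation vanishes on every singular signed word with more
than `n` singular letters. -/
def FiniteTypeLe (F : Type*) [Field F] (n : ℕ) (v : SignedWord → F) : Prop :=
  WordInvariant F v ∧
    ∀ (w : SignedWord) (S : Finset ℕ), S ⊆ w.letters → n < S.card →
      prolong F v w S = 0

/-- The empty signed word `φ`. -/
def wordEmpty : SignedWord := ⟨[], by intro p hp; simp at hp⟩

/-- The one-letter positive signed word `AA`. -/
def wordAA : SignedWord := ⟨[(0, true), (0, true)], by unfold IsSignedWord; decide⟩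

/-- The one-letter negative signed word `ĀĀ`. -/
def wordAAneg : SignedWord := ⟨[(0, false), (0, false)], by unfold IsSignedWord; decide⟩

/-- The two-letter signed word `AABB`. -/
def wordAABB : SignedWord := ⟨[(0, true), (0, true), (1, true), (1, true)], by unfold IsSignedWord; decide⟩

/-- The two-letter signed word `AAB̄B̄`. -/
def wordAABnBn : SignedWord := ⟨[(0, true), (0, true), (1, false), (1, false)], by unfold IsSignedWord; decide⟩

/-- The two-letter signed word `AB̄B̄A`. -/
def wordABnBnA : SignedWord := ⟨[(0, true), (1, false), (1, false), (0, true)], by unfold IsSignedWord; decide⟩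

/-- The two-letter signed word `ABAB`. -/
def wordABAB : SignedWord := ⟨[(0, true), (1, true), (0, true), (1, true)], by unfold IsSignedWord; decide⟩

/-- The underlying list of the word `A₁A₁A₂A₂…AₙAₙ` (all letters positive). -/
def wListN (n : ℕ) : List Letter := (List.range n).flatMap fun i => [(i, true), (i, true)]

/-- `Ncount u w`: the number of `k`-element subsets of the letters of `w`
(`k` = number of letters of `u`) whose induced signed subword is cyclically
equivalent to (an isomorphic copy of) `u`. -/
noncomputable def Ncount (u w : SignedWord) : ℕ := by
  classical
  exact (w.letters.powerset.filter fun U =>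
    U.card = u.numLetters ∧ (w.restrict U).CyclicEquiv u).card

theorem prolong_add (F : Type*) [Field F] (v₁ v₂ : SignedWord → F) (w : SignedWord) (S : Finset ℕ) :
    prolong F (v₁ + v₂) w S = prolong F v₁ w S + prolong F v₂ w S := by
  simp [prolong, ← Finset.sum_add_distrib, mul_add]

theorem prolong_smul (F : Type*) [Field F] (c : F) (v : SignedWord → F) (w : SignedWord) (S : Finset ℕ) :
    prolong F (c • v) w S = c * prolong F v w S := by
  rw [prolong, prolong, Finset.mul_sum]
  exact Finset.sum_congr rfl fun T _ => by simp [mul_left_comm]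

/-- The `F`-vector space `Vₙ` of finite type invariants of degree ≤ `n`. -/
def Vn (F : Type*) [Field F] (n : ℕ) : Submodule F (SignedWord → F) where
  carrier := {v | FiniteTypeLe F n v}
  add_mem' := by
    rintro v₁ v₂ ⟨h1, h1'⟩ ⟨h2, h2'⟩
    refine ⟨fun w w' h => by simp [h1 w w' h, h2 w w' h], fun w S hS hc => ?_⟩
    rw [prolong_add, h1' w S hS hc, h2' w S hS hc, add_zero]
  zero_mem' := ⟨fun _ _ _ => rfl, fun w S hS hc => by simp [prolong]⟩
  smul_mem' := by
    rintro c v ⟨h, h'⟩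
    refine ⟨fun w w' hww => by simp [h w w' hww], fun w S hS hc => ?_⟩
    rw [prolong_smul, h' w S hS hc, mul_zero]

/-- Cyclic equivalence as a setoid on signed words. -/
def cycSetoid : Setoid SignedWord :=
  ⟨SignedWord.CyclicEquiv, fun w => Relation.EqvGen.refl w.1,
    fun h => Relation.EqvGen.symm _ _ h, fun h h' => Relation.EqvGen.trans _ _ _ h h'⟩


/-! ### Part A: basic lemmas -/

lemma mem_lettersL {l : List Letter} {a : ℕ} : a ∈ lettersL l ↔ ∃ p ∈ l, p.1 = a := by
  simp [lettersL]

lemma lettersL_move (a : ℕ) (s : Bool) (x y : List Letter) :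
    lettersL ((a, s) :: (x ++ (a, s) :: y)) = lettersL (x ++ (a, !s) :: (y ++ [(a, !s)])) := by
  ext b
  simp only [mem_lettersL]
  constructor
  · rintro ⟨p, hp, rfl⟩
    simp only [List.mem_cons, List.mem_append] at hp
    rcases hp with rfl | hp | rfl | hp
    · exact ⟨(a, !s), by simp, rfl⟩
    · exact ⟨p, by simp [hp], rfl⟩
    · exact ⟨(a, !s), by simp, rfl⟩
    · exact ⟨p, by simp [hp], rfl⟩
  · rintro ⟨p, hp, rfl⟩
    simp only [List.mem_append, List.mem_cons, List.mem_singleton] at hp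
    rcases hp with hp | rfl | hp | hp
    · exact ⟨p, by simp [hp], rfl⟩
    · exact ⟨(a, s), by simp, rfl⟩
    · exact ⟨p, by simp [hp], rfl⟩
    · rcases hp with rfl | hp
      · exact ⟨(a, s), by simp, rfl⟩
      · simp at hp

lemma filter_move_mem (a : ℕ) (s : Bool) (x y : List Letter) {U : Finset ℕ} (ha : a ∈ U) :
    ((a, s) :: (x ++ (a, s) :: y)).filter (fun p => decide (p.1 ∈ U)) =
      (a, s) :: ((x.filter fun p => decide (p.1 ∈ U)) ++ (a, s) ::
        (y.filter fun p => decide (p.1 ∈ U))) := by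
  simp [List.filter_append, ha]

lemma filter_move_mem' (a : ℕ) (s : Bool) (x y : List Letter) {U : Finset ℕ} (ha : a ∈ U) :
    (x ++ (a, !s) :: (y ++ [(a, !s)])).filter (fun p => decide (p.1 ∈ U)) =
      (x.filter fun p => decide (p.1 ∈ U)) ++ (a, !s) ::
        ((y.filter fun p => decide (p.1 ∈ U)) ++ [(a, !s)]) := by
  simp [List.filter_append, ha]

lemma filter_move_not_mem (a : ℕ) (s : Bool) (x y : List Letter) {U : Finset ℕ} (ha : a ∉ U) :
    ((a, s) :: (x ++ (a, s) :: y)).filter (fun p => decide (p.1 ∈ U)) =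
      (x ++ (a, !s) :: (y ++ [(a, !s)])).filter (fun p => decide (p.1 ∈ U)) := by
  simp [List.filter_append, ha]

lemma cyclicEquivL_filter_move (a : ℕ) (s : Bool) (x y : List Letter) (U : Finset ℕ) :
    CyclicEquivL (((a, s) :: (x ++ (a, s) :: y)).filter (fun p => decide (p.1 ∈ U)))
      ((x ++ (a, !s) :: (y ++ [(a, !s)])).filter (fun p => decide (p.1 ∈ U))) := by
  by_cases ha : a ∈ U
  · rw [filter_move_mem a s x y ha, filter_move_mem' a s x y ha]
    exact Relation.EqvGen.rel _ _ (Or.inr ⟨a, s, _, _, rfl, rfl⟩)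
  · rw [filter_move_not_mem a s x y ha]
    exact Relation.EqvGen.refl _

lemma iso_symm {l l' : List Letter} (h : Iso l l') : Iso l' l := by
  obtain ⟨f, rfl⟩ := h
  refine ⟨f.symm, ?_⟩
  rw [List.map_map]
  conv_lhs => rw [← List.map_id l]
  apply List.map_congr_left
  intro p _
  simp
/-! ### Part B: Ncount invariance -/

open Classical in
/-- List-level version of `Ncount`. -/
noncomputable def NcountL (u : SignedWord) (l : List Letter) : ℕ :=
  ((lettersL l).powerset.filter fun U =>
    U.card = u.numLetters ∧ CyclicEquivL (l.filter fun p => decide (p.1 ∈ U)) u.1).card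

lemma Ncount_eq_NcountL (u : SignedWord) (w : SignedWord) : Ncount u w = NcountL u w.1 := by
  classical
  unfold Ncount NcountL
  apply congrArg Finset.card
  ext U
  simp only [Finset.mem_filter]
  exact Iff.rfl

lemma cyclicEquivL_congr {l l' : List Letter} (h : CyclicEquivL l l') (u : List Letter) :
    CyclicEquivL l u ↔ CyclicEquivL l' u :=
  ⟨fun h' => Relation.EqvGen.trans _ _ _ (Relation.EqvGen.symm _ _ h) h',
   fun h' => Relation.EqvGen.trans _ _ _ h h'⟩

lemma NcountL_move {l l' : List Letter} (h : Move l l') (u : SignedWord) :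
    NcountL u l = NcountL u l' := by
  classical
  obtain ⟨a, s, x, y, rfl, rfl⟩ := h
  unfold NcountL
  rw [lettersL_move a s x y]
  apply congrArg Finset.card
  apply Finset.filter_congr
  intro U _
  rw [cyclicEquivL_congr (cyclicEquivL_filter_move a s x y U) u.1]

lemma lettersL_map (f : ℕ ≃ ℕ) (l : List Letter) :
    lettersL (l.map fun p => (f p.1, p.2)) = (lettersL l).image f := by
  unfold lettersL
  rw [List.map_map]
  have : (Prod.fst ∘ fun p : Letter => ((f p.1 : ℕ), p.2)) = (f : ℕ → ℕ) ∘ Prod.fst := rfl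
  rw [this, ← List.map_map]
  ext b
  simp

lemma image_symm_image (f : ℕ ≃ ℕ) (U : Finset ℕ) : (U.image f).image f.symm = U := by
  simp [Finset.image_image]

lemma image_image_symm (f : ℕ ≃ ℕ) (U : Finset ℕ) : (U.image f.symm).image f = U := by
  simp [Finset.image_image]

lemma filter_map_image (f : ℕ ≃ ℕ) (l : List Letter) (U : Finset ℕ) :
    (l.map fun p => (f p.1, p.2)).filter (fun p => decide (p.1 ∈ U.image f)) =
      (l.filter fun p => decide (p.1 ∈ U)).map fun p => (f p.1, p.2) := by
  rw [List.filter_map]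
  refine congrArg _ (List.filter_congr ?_)
  intro p _
  simp only [Function.comp_apply, decide_eq_decide]
  constructor
  · intro h
    obtain ⟨c, hc, hcc⟩ := Finset.mem_image.mp h
    rwa [f.injective hcc] at hc
  · exact fun h => Finset.mem_image_of_mem f h

lemma cyclicEquivL_map (f : ℕ ≃ ℕ) (m : List Letter) (u : List Letter) :
    CyclicEquivL (m.map fun p => (f p.1, p.2)) u ↔ CyclicEquivL m u :=
  (cyclicEquivL_congr (Relation.EqvGen.rel _ _ (Or.inl ⟨f, rfl⟩)) u).symm

lemma NcountL_iso {l l' : List Letter} (h : Iso l l') (u : SignedWord) :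
    NcountL u l = NcountL u l' := by
  classical
  obtain ⟨f, rfl⟩ := h
  unfold NcountL
  refine Finset.card_bij' (fun U _ => U.image f) (fun V _ => V.image f.symm) ?_ ?_ ?_ ?_
  · intro U hU
    simp only [Finset.mem_filter, Finset.mem_powerset] at hU ⊢
    rw [lettersL_map]
    refine ⟨Finset.image_subset_image hU.1,
      by rw [Finset.card_image_of_injective _ f.injective]; exact hU.2.1, ?_⟩
    rw [filter_map_image, cyclicEquivL_map]
    exact hU.2.2
  · intro V hV
    simp only [Finset.mem_filter, Finset.mem_powerset, lettersL_map] at hV ⊢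
    obtain ⟨hV1, hV2, hV3⟩ := hV
    refine ⟨?_, by rw [Finset.card_image_of_injective _ f.symm.injective]; exact hV2, ?_⟩
    · intro b hb
      obtain ⟨c, hc, rfl⟩ := Finset.mem_image.mp hb
      obtain ⟨d, hd, rfl⟩ := Finset.mem_image.mp (hV1 hc)
      simpa using hd
    · rw [← cyclicEquivL_map f, ← filter_map_image, image_image_symm]
      exact hV3
  · intro U _
    exact image_symm_image f U
  · intro V _
    exact image_image_symm f V

lemma NcountL_cyclic {l l' : List Letter} (h : CyclicEquivL l l') (u : SignedWord) :
    NcountL u l = NcountL u l' := by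
  induction h with
  | rel a b hab =>
    rcases hab with h | h
    · exact NcountL_iso h u
    · exact NcountL_move h u
  | refl a => rfl
  | symm a b _ ih => exact ih.symm
  | trans a b c _ _ ih1 ih2 => exact ih1.trans ih2

lemma Ncount_invariant (u : SignedWord) (F : Type*) [Field F] :
    WordInvariant F (fun w => (Ncount u w : F)) := by
  intro w w' h
  simp only [Ncount_eq_NcountL]
  rw [NcountL_cyclic h u]
/-! ### Part C: degree of Ncount -/

lemma letters_delete (w : SignedWord) (T : Finset ℕ) :
    (w.delete T).letters = w.letters \ T := by
  ext a
  simp only [SignedWord.letters, SignedWord.delete, mem_lettersL, Finset.mem_sdiff]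
  constructor
  · rintro ⟨p, hp, rfl⟩
    rw [List.mem_filter] at hp
    exact ⟨⟨p, hp.1, rfl⟩, by simpa using hp.2⟩
  · rintro ⟨⟨p, hp, rfl⟩, ha⟩
    exact ⟨p, List.mem_filter.mpr ⟨hp, by simpa using ha⟩, rfl⟩

lemma delete_empty (w : SignedWord) : w.delete ∅ = w := by
  apply Subtype.ext
  show w.1.filter _ = w.1
  rw [List.filter_eq_self]
  intro p _
  simp

lemma restrict_delete (w : SignedWord) (T U : Finset ℕ) (h : ∀ a ∈ U, a ∉ T) :
    (w.delete T).restrict U = w.restrict U := by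
  apply Subtype.ext
  show (w.1.filter _).filter _ = w.1.filter _
  rw [List.filter_filter]
  apply List.filter_congr
  intro p _
  by_cases hp : p.1 ∈ U
  · simp [hp, h p.1 hp]
  · simp [hp]

lemma sum_pow_neg_one (F : Type*) [Field F] (x : Finset ℕ) :
    (∑ m ∈ x.powerset, (-1 : F) ^ m.card) = if x = ∅ then 1 else 0 := by
  classical
  have := Finset.sum_powerset_neg_one_pow_card (x := x)
  have h2 : ((∑ m ∈ x.powerset, (-1 : ℤ) ^ m.card : ℤ) : F) =
      ∑ m ∈ x.powerset, (-1 : F) ^ m.card := by push_cast; rfl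
  rw [← h2, this]
  split <;> simp

open Classical in
lemma Ncount_delete (u w : SignedWord) {S T : Finset ℕ} (hT : T ∈ S.powerset) :
    Ncount u (w.delete T) =
      (w.letters.powerset.filter fun U =>
        (U ∩ T = ∅ ∧ U.card = u.numLetters) ∧
          CyclicEquivL (w.1.filter fun p => decide (p.1 ∈ U)) u.1).card := by
  classical
  rw [Ncount_eq_NcountL]
  unfold NcountL
  apply congrArg Finset.card
  ext U
  simp only [Finset.mem_filter, Finset.mem_powerset]
  have hlet : lettersL (w.delete T).1 = w.letters \ T := letters_delete w T
  constructor
  · rintro ⟨hsub, hcard, hequiv⟩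
    rw [hlet, Finset.subset_sdiff] at hsub
    have hdisj : U ∩ T = ∅ := by
      rw [← Finset.disjoint_iff_inter_eq_empty]
      exact hsub.2
    have : ((w.delete T).1.filter fun p => decide (p.1 ∈ U)) =
        w.1.filter fun p => decide (p.1 ∈ U) := by
      have := restrict_delete w T U (fun a ha => by
        intro haT
        exact (Finset.disjoint_left.mp hsub.2) ha haT)
      exact congrArg Subtype.val this
    rw [this] at hequiv
    exact ⟨hsub.1, ⟨hdisj, hcard⟩, hequiv⟩
  · rintro ⟨hsub, ⟨hdisj, hcard⟩, hequiv⟩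
    have hd : ∀ a ∈ U, a ∉ T := fun a ha haT =>
      Finset.notMem_empty a (hdisj ▸ Finset.mem_inter.mpr ⟨ha, haT⟩)
    have heq : ((w.delete T).1.filter fun p => decide (p.1 ∈ U)) =
        w.1.filter fun p => decide (p.1 ∈ U) :=
      congrArg Subtype.val (restrict_delete w T U hd)
    refine ⟨?_, hcard, heq ▸ hequiv⟩
    rw [hlet, Finset.subset_sdiff]
    exact ⟨hsub, Finset.disjoint_left.mpr fun a ha haT => hd a ha haT⟩

open Classical in
lemma Ncount_degree (F : Type*) [Field F] (u : SignedWord) (w : SignedWord) (S : Finset ℕ)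
    (hS : S ⊆ w.letters) (hc : u.numLetters < S.card) :
    prolong F (fun w => (Ncount u w : F)) w S = 0 := by
  classical
  unfold prolong
  have hrw : ∀ T ∈ S.powerset,
      (-1 : F) ^ T.card * (Ncount u (w.delete T) : F) =
        ∑ U ∈ w.letters.powerset,
          if (U ∩ T = ∅ ∧ U.card = u.numLetters) ∧
              CyclicEquivL (w.1.filter fun p => decide (p.1 ∈ U)) u.1
            then (-1 : F) ^ T.card else 0 := by
    intro T hT
    rw [Ncount_delete u w hT, Finset.card_filter]
    push_cast
    rw [Finset.mul_sum]
    apply Finset.sum_congr rfl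
    intro U _
    split <;> simp
  rw [Finset.sum_congr rfl hrw, Finset.sum_comm]
  apply Finset.sum_eq_zero
  intro U hU
  by_cases hq : U.card = u.numLetters ∧
      CyclicEquivL (w.1.filter fun p => decide (p.1 ∈ U)) u.1
  · have : ∀ T ∈ S.powerset,
        (if (U ∩ T = ∅ ∧ U.card = u.numLetters) ∧
            CyclicEquivL (w.1.filter fun p => decide (p.1 ∈ U)) u.1
          then (-1 : F) ^ T.card else 0) =
        if U ∩ T = ∅ then (-1 : F) ^ T.card else 0 := by
      intro T _
      by_cases h : U ∩ T = ∅ <;> simp [h, hq.1, hq.2]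
    rw [Finset.sum_congr rfl this, Finset.sum_ite, Finset.sum_const_zero, add_zero]
    have hfilter : S.powerset.filter (fun T => U ∩ T = ∅) = (S \ U).powerset := by
      ext T
      simp only [Finset.mem_filter, Finset.mem_powerset, Finset.subset_sdiff]
      rw [← Finset.disjoint_iff_inter_eq_empty]
      constructor
      · exact fun ⟨h1, h2⟩ => ⟨h1, h2.symm⟩
      · exact fun ⟨h1, h2⟩ => ⟨h1, h2.symm⟩
    rw [hfilter, sum_pow_neg_one]
    have hne : S \ U ≠ ∅ := by
      intro hempty
      have hsub : S ⊆ U := by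
        intro a ha
        by_contra haU
        exact Finset.notMem_empty a (hempty ▸ Finset.mem_sdiff.mpr ⟨ha, haU⟩)
      have h2 := Finset.card_le_card hsub
      have h3 := hq.1
      omega
    rw [if_neg hne]
  · apply Finset.sum_eq_zero
    intro T _
    rw [if_neg]
    exact fun h => hq ⟨h.1.2, h.2⟩
/-! ### Part D: the invariant `inv4` separating two-letter classes -/

def inv4 : List Letter → ℕ
  | [p, q, r, _] =>
    if p.1 = r.1 then 5
    else if p.1 = q.1 then (cond p.2 1 0) + (cond r.2 1 0)
    else (cond p.2 0 1) + (cond q.2 1 0)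
  | _ => 9

def P4 (l : List Letter) : Prop := IsSignedWord l ∧ l.length = 4

lemma letterF_injective (f : ℕ ≃ ℕ) :
    Function.Injective (fun p : Letter => ((f p.1 : ℕ), p.2)) := by
  rintro ⟨a, s⟩ ⟨b, t⟩ h
  simp only [Prod.mk.injEq] at h
  exact Prod.ext (f.injective h.1) h.2

lemma count_map_eq (f : ℕ ≃ ℕ) (l : List Letter) (p : Letter) :
    (l.map fun q => ((f q.1 : ℕ), q.2)).count (f p.1, p.2) = l.count p := by
  induction l with
  | nil => rfl
  | cons q l ih =>
    simp only [List.map_cons, List.count_cons, ih]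
    congr 1
    by_cases h : q = p
    · subst h; simp
    · have hne : ((f q.1 : ℕ), q.2) ≠ (f p.1, p.2) := fun hc => h (letterF_injective f hc)
      simp [h, hne]

lemma isSignedWord_map (f : ℕ ≃ ℕ) {l : List Letter} (h : IsSignedWord l) :
    IsSignedWord (l.map fun p => (f p.1, p.2)) := by
  intro p' hp'
  obtain ⟨p, hp, rfl⟩ := List.mem_map.mp hp'
  constructor
  · exact (count_map_eq f l p).trans (h p hp).1
  · intro q' hq' hq1
    obtain ⟨q, hq, rfl⟩ := List.mem_map.mp hq'
    simp only at hq1 ⊢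
    exact (h p hp).2 q hq (f.injective hq1)

lemma iso_isSignedWord {l l' : List Letter} (h : Iso l l') (hl : IsSignedWord l) :
    IsSignedWord l' := by
  obtain ⟨f, rfl⟩ := h
  exact isSignedWord_map f hl

lemma inv4_map (f : ℕ ≃ ℕ) (l : List Letter) :
    inv4 (l.map fun p => (f p.1, p.2)) = inv4 l := by
  match l with
  | [] => rfl
  | [p] => rfl
  | [p, q] => rfl
  | [p, q, r] => rfl
  | p :: q :: r :: t :: u :: rest => rfl
  | [p, q, r, t] =>
    simp only [List.map]
    unfold inv4
    simp only [f.injective.eq_iff]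

lemma move_no_letter {a : ℕ} {s : Bool} {x y : List Letter}
    (h : IsSignedWord ((a, s) :: (x ++ (a, s) :: y))) : ∀ p ∈ x ++ y, p.1 ≠ a := by
  intro p hp hpa
  have hmem : p ∈ (a, s) :: (x ++ (a, s) :: y) := by
    rcases List.mem_append.mp hp with h' | h' <;> simp [h']
  have hps : p.2 = s := (h (a, s) (by simp)).2 p hmem hpa
  have hp2 : p = (a, s) := by
    obtain ⟨b, t⟩ := p
    simp only at hpa hps
    simp [hpa, hps]
  have hcount := (h (a, s) (by simp)).1
  subst hp2
  simp only [List.count_cons, List.count_append, beq_self_eq_true, if_true] at hcount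
  have hxy : 0 < x.count (a, s) + y.count (a, s) := by
    rcases List.mem_append.mp hp with h' | h'
    · have := List.count_pos_iff.mpr h'; omega
    · have := List.count_pos_iff.mpr h'; omega
  omega

lemma move_no_letter' {a : ℕ} {s : Bool} {x y : List Letter}
    (h : IsSignedWord (x ++ (a, !s) :: (y ++ [(a, !s)]))) : ∀ p ∈ x ++ y, p.1 ≠ a := by
  intro p hp hpa
  have hmem : p ∈ x ++ (a, !s) :: (y ++ [(a, !s)]) := by
    rcases List.mem_append.mp hp with h' | h' <;> simp [h']
  have hmem2 : (a, !s) ∈ x ++ (a, !s) :: (y ++ [(a, !s)]) := by simp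
  have hps : p.2 = !s := (h (a, !s) hmem2).2 p hmem hpa
  have hp2 : p = (a, !s) := by
    obtain ⟨b, t⟩ := p
    simp only at hpa hps
    simp [hpa, hps]
  have hcount := (h (a, !s) hmem2).1
  subst hp2
  have hxy : 0 < x.count (a, !s) + y.count (a, !s) := by
    rcases List.mem_append.mp hp with h' | h'
    · have := List.count_pos_iff.mpr h'; omega
    · have := List.count_pos_iff.mpr h'; omega
  simp only [List.count_cons, List.count_append, beq_self_eq_true, if_true,
    List.count_singleton] at hcount
  omega

lemma move_isSignedWord {l l' : List Letter} (h : Move l l') :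
    IsSignedWord l ↔ IsSignedWord l' := by
  obtain ⟨a, s, x, y, rfl, rfl⟩ := h
  constructor
  · intro hl
    have hxy := move_no_letter hl
    intro p hp
    simp only [List.mem_append, List.mem_cons, List.mem_singleton] at hp
    have hmemxy : p ∈ x ++ y ∨ p = (a, !s) := by
      rcases hp with h' | h' | h' | h'
      · exact Or.inl (List.mem_append.mpr (Or.inl h'))
      · exact Or.inr h'
      · exact Or.inl (List.mem_append.mpr (Or.inr h'))
      · rcases h' with h' | h'
        · exact Or.inr h'
        · simp at h'
    rcases hmemxy with hpx | rfl
    · have hpa : p.1 ≠ a := hxy p hpx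
      have hpl : p ∈ (a, s) :: (x ++ (a, s) :: y) := by
        rcases List.mem_append.mp hpx with h' | h' <;> simp [h']
      constructor
      · have hc := (hl p hpl).1
        have hne1 : ((a, s) == p) = false := by
          simp only [beq_eq_false_iff_ne]; intro h'; exact hpa (by rw [← h'])
        have hne2 : ((a, !s) == p) = false := by
          simp only [beq_eq_false_iff_ne]; intro h'; exact hpa (by rw [← h'])
        simp only [List.count_cons, List.count_append, List.count_singleton, hne1, hne2,
          if_false, beq_iff_eq] at hc ⊢
        simpa using hc
      · intro q hq hq1
        simp only [List.mem_append, List.mem_cons, List.mem_singleton] at hq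
        have : q ∈ x ++ y ∨ q = (a, !s) := by
          rcases hq with h' | h' | h' | h'
          · exact Or.inl (List.mem_append.mpr (Or.inl h'))
          · exact Or.inr h'
          · exact Or.inl (List.mem_append.mpr (Or.inr h'))
          · rcases h' with h' | h'
            · exact Or.inr h'
            · simp at h'
        rcases this with hqx | rfl
        · have hql : q ∈ (a, s) :: (x ++ (a, s) :: y) := by
            rcases List.mem_append.mp hqx with h' | h' <;> simp [h']
          exact (hl p hpl).2 q hql hq1
        · exact absurd hq1 (by simpa using hpa.symm)
    · constructor
      · have : ∀ q ∈ x ++ y, ((a, !s) == q) = false := by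
          intro q hq
          simp only [beq_eq_false_iff_ne]
          intro h'
          exact hxy q hq (by rw [← h'])
        have h1 : x.count (a, !s) = 0 := by
          rw [List.count_eq_zero]
          intro h'
          exact hxy _ (List.mem_append.mpr (Or.inl h')) rfl
        have h2 : y.count (a, !s) = 0 := by
          rw [List.count_eq_zero]
          intro h'
          exact hxy _ (List.mem_append.mpr (Or.inr h')) rfl
        simp [List.count_cons, List.count_append, h1, h2]
      · intro q hq hq1
        simp only [List.mem_append, List.mem_cons, List.mem_singleton] at hq
        rcases hq with h' | h' | h' | h'
        · exact absurd hq1 (hxy q (List.mem_append.mpr (Or.inl h')))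
        · rw [h']
        · exact absurd hq1 (hxy q (List.mem_append.mpr (Or.inr h')))
        · rcases h' with h' | h'
          · rw [h']
          · simp at h'
  · intro hl
    have hxy := move_no_letter' hl
    intro p hp
    simp only [List.mem_cons, List.mem_append] at hp
    have hmemxy : p ∈ x ++ y ∨ p = (a, s) := by
      rcases hp with h' | h' | h' | h'
      · exact Or.inr h'
      · exact Or.inl (List.mem_append.mpr (Or.inl h'))
      · exact Or.inr h'
      · exact Or.inl (List.mem_append.mpr (Or.inr h'))
    rcases hmemxy with hpx | rfl
    · have hpa : p.1 ≠ a := hxy p hpx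
      have hpl : p ∈ x ++ (a, !s) :: (y ++ [(a, !s)]) := by
        rcases List.mem_append.mp hpx with h' | h' <;> simp [h']
      constructor
      · have hc := (hl p hpl).1
        have hne1 : ((a, s) == p) = false := by
          simp only [beq_eq_false_iff_ne]; intro h'; exact hpa (by rw [← h'])
        have hne2 : ((a, !s) == p) = false := by
          simp only [beq_eq_false_iff_ne]; intro h'; exact hpa (by rw [← h'])
        simp only [List.count_cons, List.count_append, List.count_singleton, hne1, hne2,
          if_false, beq_iff_eq] at hc ⊢
        simpa using hc
      · intro q hq hq1
        simp only [List.mem_cons, List.mem_append] at hq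
        have : q ∈ x ++ y ∨ q = (a, s) := by
          rcases hq with h' | h' | h' | h'
          · exact Or.inr h'
          · exact Or.inl (List.mem_append.mpr (Or.inl h'))
          · exact Or.inr h'
          · exact Or.inl (List.mem_append.mpr (Or.inr h'))
        rcases this with hqx | rfl
        · have hql : q ∈ x ++ (a, !s) :: (y ++ [(a, !s)]) := by
            rcases List.mem_append.mp hqx with h' | h' <;> simp [h']
          exact (hl p hpl).2 q hql hq1
        · exact absurd hq1 (by simpa using hpa.symm)
    · constructor
      · have h1 : x.count (a, s) = 0 := by
          rw [List.count_eq_zero]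
          intro h'
          exact hxy _ (List.mem_append.mpr (Or.inl h')) rfl
        have h2 : y.count (a, s) = 0 := by
          rw [List.count_eq_zero]
          intro h'
          exact hxy _ (List.mem_append.mpr (Or.inr h')) rfl
        simp [List.count_cons, List.count_append, h1, h2]
      · intro q hq hq1
        simp only [List.mem_cons, List.mem_append] at hq
        rcases hq with h' | h' | h' | h'
        · rw [h']
        · exact absurd hq1 (hxy q (List.mem_append.mpr (Or.inl h')))
        · rw [h']
        · exact absurd hq1 (hxy q (List.mem_append.mpr (Or.inr h')))
lemma pair_eq {a : ℕ} {s : Bool} {p q : Letter}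
    (h : IsSignedWord ((a, s) :: (x' ++ (a, s) :: y')))
    (hd : x' ++ y' = [p, q]) (hpa : p.1 ≠ a) : q = p := by
  have hpl : p ∈ (a, s) :: (x' ++ (a, s) :: y') := by
    have : p ∈ x' ++ y' := by rw [hd]; simp
    rcases List.mem_append.mp this with h' | h' <;> simp [h']
  have hcount := (h p hpl).1
  have hne1 : (((a, s) : Letter) == p) = false := by
    simp only [beq_eq_false_iff_ne]; intro h'; exact hpa (by rw [← h'])
  have hxy : x'.count p + y'.count p = List.count p [p, q] := by
    rw [← List.count_append, hd]
  simp only [List.count_cons, List.count_append, hne1, if_false, beq_iff_eq] at hcount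
  simp only [List.count_cons, List.count_nil, beq_iff_eq] at hxy
  by_contra hqp
  simp [hqp] at hxy
  omega

lemma move_inv4 {l l' : List Letter} (h : Move l l') (hsw : IsSignedWord l)
    (hlen : l.length = 4) : inv4 l = inv4 l' := by
  obtain ⟨a, s, x, y, rfl, rfl⟩ := h
  have hxy := move_no_letter hsw
  have hlen2 : x.length + y.length = 2 := by
    simp only [List.length_cons, List.length_append] at hlen
    omega
  rcases x with _ | ⟨p, _ | ⟨p2, _ | ⟨p3, x⟩⟩⟩
  · -- x = []
    rcases y with _ | ⟨q1, _ | ⟨q2, _ | ⟨q3, y⟩⟩⟩ <;> simp only [List.length_nil,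
      List.length_cons] at hlen2 <;> try omega
    -- y = [q1, q2]
    have hpa : q1.1 ≠ a := hxy q1 (by simp)
    have hqp : q2 = q1 := pair_eq hsw rfl hpa
    subst hqp
    obtain ⟨b, t⟩ := q2
    simp only at hpa
    have hab : ¬ a = b := fun h' => hpa h'.symm
    simp only [List.nil_append, List.cons_append, inv4, hab, if_false, if_true]
    cases s <;> simp
  · -- x = [p]
    rcases y with _ | ⟨q1, _ | ⟨q2, y⟩⟩ <;> simp only [List.length_nil,
      List.length_cons] at hlen2 <;> try omega
    have hpa : p.1 ≠ a := hxy p (by simp)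
    have hqp : q1 = p := pair_eq hsw rfl hpa
    subst hqp
    obtain ⟨b, t⟩ := q1
    simp [inv4]
  · -- x = [p, p2]
    rcases y with _ | ⟨q1, y⟩ <;> simp only [List.length_nil,
      List.length_cons] at hlen2 <;> try omega
    have hpa : p.1 ≠ a := hxy p (by simp)
    have hqp : p2 = p := pair_eq hsw rfl hpa
    subst hqp
    obtain ⟨b, t⟩ := p2
    simp only at hpa
    have hab : ¬ a = b := fun h' => hpa h'.symm
    simp only [List.nil_append, List.cons_append, List.append_nil, inv4, hab, hpa,
      if_false, if_true]
    cases s <;> cases t <;> simp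
  · simp only [List.length_cons] at hlen2; omega

lemma cyclic_P4_inv4 {l l' : List Letter} (h : CyclicEquivL l l') :
    (P4 l ↔ P4 l') ∧ (P4 l → inv4 l = inv4 l') := by
  induction h with
  | rel a b hab =>
    rcases hab with h | h
    · constructor
      · constructor
        · rintro ⟨hs, hl⟩
          obtain ⟨f, rfl⟩ := h
          exact ⟨isSignedWord_map f hs, by simpa using hl⟩
        · rintro ⟨hs, hl⟩
          have h' := iso_symm h
          obtain ⟨f, rfl⟩ := h
          refine ⟨iso_isSignedWord h' hs, by simpa using hl⟩
      · rintro ⟨hs, hl⟩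
        obtain ⟨f, rfl⟩ := h
        exact (inv4_map f a).symm
    · constructor
      · have hlen : a.length = b.length := by
          obtain ⟨c, s, x, y, rfl, rfl⟩ := h
          simp
          omega
        constructor
        · rintro ⟨hs, hl⟩
          exact ⟨(move_isSignedWord h).mp hs, hlen ▸ hl⟩
        · rintro ⟨hs, hl⟩
          exact ⟨(move_isSignedWord h).mpr hs, hlen.symm ▸ hl⟩
      · rintro ⟨hs, hl⟩
        exact move_inv4 h hs hl
  | refl a => exact ⟨Iff.rfl, fun _ => rfl⟩
  | symm a b _ ih =>
    exact ⟨ih.1.symm, fun h' => (ih.2 (ih.1.mpr h')).symm⟩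
  | trans a b c _ _ ih1 ih2 =>
    exact ⟨ih1.1.trans ih2.1, fun h' => (ih1.2 h').trans (ih2.2 (ih1.1.mp h'))⟩

lemma inv4_of_equiv {l l' : List Letter} (h : CyclicEquivL l l') (hs : IsSignedWord l)
    (hl : l.length = 4) : inv4 l = inv4 l' :=
  (cyclic_P4_inv4 h).2 ⟨hs, hl⟩
/-! ### Part E: classification chains -/

def canon24 : List (List Letter) := [[((0 : ℕ), true), ((0 : ℕ), true), ((1 : ℕ), true), ((1 : ℕ), true)],
  [((0 : ℕ), true), ((0 : ℕ), true), ((1 : ℕ), false), ((1 : ℕ), false)],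
  [((0 : ℕ), true), ((1 : ℕ), true), ((0 : ℕ), true), ((1 : ℕ), true)],
  [((0 : ℕ), true), ((1 : ℕ), true), ((1 : ℕ), true), ((0 : ℕ), true)],
  [((0 : ℕ), true), ((1 : ℕ), false), ((0 : ℕ), true), ((1 : ℕ), false)],
  [((0 : ℕ), true), ((1 : ℕ), false), ((1 : ℕ), false), ((0 : ℕ), true)],
  [((0 : ℕ), false), ((0 : ℕ), false), ((1 : ℕ), true), ((1 : ℕ), true)],
  [((0 : ℕ), false), ((0 : ℕ), false), ((1 : ℕ), false), ((1 : ℕ), false)],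
  [((0 : ℕ), false), ((1 : ℕ), true), ((0 : ℕ), false), ((1 : ℕ), true)],
  [((0 : ℕ), false), ((1 : ℕ), true), ((1 : ℕ), true), ((0 : ℕ), false)],
  [((0 : ℕ), false), ((1 : ℕ), false), ((0 : ℕ), false), ((1 : ℕ), false)],
  [((0 : ℕ), false), ((1 : ℕ), false), ((1 : ℕ), false), ((0 : ℕ), false)],
  [((1 : ℕ), true), ((0 : ℕ), true), ((0 : ℕ), true), ((1 : ℕ), true)],
  [((1 : ℕ), true), ((0 : ℕ), true), ((1 : ℕ), true), ((0 : ℕ), true)],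
  [((1 : ℕ), true), ((0 : ℕ), false), ((0 : ℕ), false), ((1 : ℕ), true)],
  [((1 : ℕ), true), ((0 : ℕ), false), ((1 : ℕ), true), ((0 : ℕ), false)],
  [((1 : ℕ), true), ((1 : ℕ), true), ((0 : ℕ), true), ((0 : ℕ), true)],
  [((1 : ℕ), true), ((1 : ℕ), true), ((0 : ℕ), false), ((0 : ℕ), false)],
  [((1 : ℕ), false), ((0 : ℕ), true), ((0 : ℕ), true), ((1 : ℕ), false)],
  [((1 : ℕ), false), ((0 : ℕ), true), ((1 : ℕ), false), ((0 : ℕ), true)],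
  [((1 : ℕ), false), ((0 : ℕ), false), ((0 : ℕ), false), ((1 : ℕ), false)],
  [((1 : ℕ), false), ((0 : ℕ), false), ((1 : ℕ), false), ((0 : ℕ), false)],
  [((1 : ℕ), false), ((1 : ℕ), false), ((0 : ℕ), true), ((0 : ℕ), true)],
  [((1 : ℕ), false), ((1 : ℕ), false), ((0 : ℕ), false), ((0 : ℕ), false)]]

lemma chain0 : CyclicEquivL [((0 : ℕ), true), ((0 : ℕ), true), ((1 : ℕ), true), ((1 : ℕ), true)] wordAABB.1 :=
  Relation.EqvGen.refl _

lemma chain1 : CyclicEquivL [((0 : ℕ), true), ((0 : ℕ), true), ((1 : ℕ), false), ((1 : ℕ), false)] wordAABnBn.1 :=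
  Relation.EqvGen.refl _

lemma chain2 : CyclicEquivL [((0 : ℕ), true), ((1 : ℕ), true), ((0 : ℕ), true), ((1 : ℕ), true)] wordABAB.1 :=
  Relation.EqvGen.refl _

lemma chain3 : CyclicEquivL [((0 : ℕ), true), ((1 : ℕ), true), ((1 : ℕ), true), ((0 : ℕ), true)] wordAABnBn.1 :=
  (Relation.EqvGen.trans _ _ _ (Relation.EqvGen.rel _ _ (Or.inr ⟨0, true, [(1, true), (1, true)], [], rfl, rfl⟩)) (Relation.EqvGen.rel _ _ (Or.inl ⟨Equiv.swap 0 1, by decide⟩)))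

lemma chain4 : CyclicEquivL [((0 : ℕ), true), ((1 : ℕ), false), ((0 : ℕ), true), ((1 : ℕ), false)] wordABAB.1 :=
  (Relation.EqvGen.trans _ _ _ (Relation.EqvGen.symm _ _ (Relation.EqvGen.rel _ _ (Or.inr ⟨1, true, [(0, true)], [(0, true)], rfl, rfl⟩))) (Relation.EqvGen.rel _ _ (Or.inl ⟨Equiv.swap 0 1, by decide⟩)))

lemma chain5 : CyclicEquivL [((0 : ℕ), true), ((1 : ℕ), false), ((1 : ℕ), false), ((0 : ℕ), true)] wordABnBnA.1 :=
  Relation.EqvGen.refl _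

lemma chain6 : CyclicEquivL [((0 : ℕ), false), ((0 : ℕ), false), ((1 : ℕ), true), ((1 : ℕ), true)] wordAABnBn.1 :=
  (Relation.EqvGen.trans _ _ _ (Relation.EqvGen.trans _ _ _ (Relation.EqvGen.rel _ _ (Or.inr ⟨0, false, [], [(1, true), (1, true)], rfl, rfl⟩)) (Relation.EqvGen.rel _ _ (Or.inr ⟨0, true, [(1, true), (1, true)], [], rfl, rfl⟩))) (Relation.EqvGen.rel _ _ (Or.inl ⟨Equiv.swap 0 1, by decide⟩)))

lemma chain7 : CyclicEquivL [((0 : ℕ), false), ((0 : ℕ), false), ((1 : ℕ), false), ((1 : ℕ), false)] wordABnBnA.1 :=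
  (Relation.EqvGen.rel _ _ (Or.inr ⟨0, false, [], [(1, false), (1, false)], rfl, rfl⟩))

lemma chain8 : CyclicEquivL [((0 : ℕ), false), ((1 : ℕ), true), ((0 : ℕ), false), ((1 : ℕ), true)] wordABAB.1 :=
  (Relation.EqvGen.trans _ _ _ (Relation.EqvGen.rel _ _ (Or.inr ⟨0, false, [(1, true)], [(1, true)], rfl, rfl⟩)) (Relation.EqvGen.rel _ _ (Or.inl ⟨Equiv.swap 0 1, by decide⟩)))

lemma chain9 : CyclicEquivL [((0 : ℕ), false), ((1 : ℕ), true), ((1 : ℕ), true), ((0 : ℕ), false)] wordAABB.1 :=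
  (Relation.EqvGen.symm _ _ (Relation.EqvGen.rel _ _ (Or.inr ⟨0, true, [], [(1, true), (1, true)], rfl, rfl⟩)))

lemma chain10 : CyclicEquivL [((0 : ℕ), false), ((1 : ℕ), false), ((0 : ℕ), false), ((1 : ℕ), false)] wordABAB.1 :=
  (Relation.EqvGen.trans _ _ _ (Relation.EqvGen.rel _ _ (Or.inr ⟨0, false, [(1, false)], [(1, false)], rfl, rfl⟩)) (Relation.EqvGen.rel _ _ (Or.inr ⟨1, false, [(0, true)], [(0, true)], rfl, rfl⟩)))

lemma chain11 : CyclicEquivL [((0 : ℕ), false), ((1 : ℕ), false), ((1 : ℕ), false), ((0 : ℕ), false)] wordAABnBn.1 :=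
  (Relation.EqvGen.symm _ _ (Relation.EqvGen.rel _ _ (Or.inr ⟨0, true, [], [(1, false), (1, false)], rfl, rfl⟩)))

lemma chain12 : CyclicEquivL [((1 : ℕ), true), ((0 : ℕ), true), ((0 : ℕ), true), ((1 : ℕ), true)] wordAABnBn.1 :=
  (Relation.EqvGen.rel _ _ (Or.inr ⟨1, true, [(0, true), (0, true)], [], rfl, rfl⟩))

lemma chain13 : CyclicEquivL [((1 : ℕ), true), ((0 : ℕ), true), ((1 : ℕ), true), ((0 : ℕ), true)] wordABAB.1 :=
  (Relation.EqvGen.rel _ _ (Or.inl ⟨Equiv.swap 0 1, by decide⟩))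

lemma chain14 : CyclicEquivL [((1 : ℕ), true), ((0 : ℕ), false), ((0 : ℕ), false), ((1 : ℕ), true)] wordABnBnA.1 :=
  (Relation.EqvGen.rel _ _ (Or.inl ⟨Equiv.swap 0 1, by decide⟩))

lemma chain15 : CyclicEquivL [((1 : ℕ), true), ((0 : ℕ), false), ((1 : ℕ), true), ((0 : ℕ), false)] wordABAB.1 :=
  (Relation.EqvGen.symm _ _ (Relation.EqvGen.rel _ _ (Or.inr ⟨0, true, [(1, true)], [(1, true)], rfl, rfl⟩)))

lemma chain16 : CyclicEquivL [((1 : ℕ), true), ((1 : ℕ), true), ((0 : ℕ), true), ((0 : ℕ), true)] wordAABB.1 :=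
  (Relation.EqvGen.rel _ _ (Or.inl ⟨Equiv.swap 0 1, by decide⟩))

lemma chain17 : CyclicEquivL [((1 : ℕ), true), ((1 : ℕ), true), ((0 : ℕ), false), ((0 : ℕ), false)] wordAABnBn.1 :=
  (Relation.EqvGen.rel _ _ (Or.inl ⟨Equiv.swap 0 1, by decide⟩))

lemma chain18 : CyclicEquivL [((1 : ℕ), false), ((0 : ℕ), true), ((0 : ℕ), true), ((1 : ℕ), false)] wordAABB.1 :=
  (Relation.EqvGen.rel _ _ (Or.inr ⟨1, false, [(0, true), (0, true)], [], rfl, rfl⟩))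

lemma chain19 : CyclicEquivL [((1 : ℕ), false), ((0 : ℕ), true), ((1 : ℕ), false), ((0 : ℕ), true)] wordABAB.1 :=
  (Relation.EqvGen.rel _ _ (Or.inr ⟨1, false, [(0, true)], [(0, true)], rfl, rfl⟩))

lemma chain20 : CyclicEquivL [((1 : ℕ), false), ((0 : ℕ), false), ((0 : ℕ), false), ((1 : ℕ), false)] wordAABnBn.1 :=
  (Relation.EqvGen.trans _ _ _ (Relation.EqvGen.symm _ _ (Relation.EqvGen.rel _ _ (Or.inr ⟨1, true, [], [(0, false), (0, false)], rfl, rfl⟩))) (Relation.EqvGen.rel _ _ (Or.inl ⟨Equiv.swap 0 1, by decide⟩)))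

lemma chain21 : CyclicEquivL [((1 : ℕ), false), ((0 : ℕ), false), ((1 : ℕ), false), ((0 : ℕ), false)] wordABAB.1 :=
  (Relation.EqvGen.trans _ _ _ (Relation.EqvGen.trans _ _ _ (Relation.EqvGen.rel _ _ (Or.inr ⟨1, false, [(0, false)], [(0, false)], rfl, rfl⟩)) (Relation.EqvGen.rel _ _ (Or.inr ⟨0, false, [(1, true)], [(1, true)], rfl, rfl⟩))) (Relation.EqvGen.rel _ _ (Or.inl ⟨Equiv.swap 0 1, by decide⟩)))

lemma chain22 : CyclicEquivL [((1 : ℕ), false), ((1 : ℕ), false), ((0 : ℕ), true), ((0 : ℕ), true)] wordAABnBn.1 :=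
  (Relation.EqvGen.trans _ _ _ (Relation.EqvGen.rel _ _ (Or.inr ⟨1, false, [], [(0, true), (0, true)], rfl, rfl⟩)) (Relation.EqvGen.rel _ _ (Or.inr ⟨1, true, [(0, true), (0, true)], [], rfl, rfl⟩)))

lemma chain23 : CyclicEquivL [((1 : ℕ), false), ((1 : ℕ), false), ((0 : ℕ), false), ((0 : ℕ), false)] wordABnBnA.1 :=
  (Relation.EqvGen.symm _ _ (Relation.EqvGen.rel _ _ (Or.inr ⟨0, true, [(1, false), (1, false)], [], rfl, rfl⟩)))

lemma canon_chain : ∀ l ∈ canon24, CyclicEquivL l wordAABB.1 ∨ CyclicEquivL l wordAABnBn.1 ∨ CyclicEquivL l wordABnBnA.1 ∨ CyclicEquivL l wordABAB.1 := by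
  intro l hl
  simp only [canon24, List.mem_cons, List.not_mem_nil, or_false] at hl
  rcases hl with rfl | rfl | rfl | rfl | rfl | rfl | rfl | rfl | rfl | rfl | rfl | rfl | rfl | rfl | rfl | rfl | rfl | rfl | rfl | rfl | rfl | rfl | rfl | rfl
  · exact Or.inl chain0
  · exact Or.inr (Or.inl chain1)
  · exact Or.inr (Or.inr (Or.inr chain2))
  · exact Or.inr (Or.inl chain3)
  · exact Or.inr (Or.inr (Or.inr chain4))
  · exact Or.inr (Or.inr (Or.inl chain5))
  · exact Or.inr (Or.inl chain6)
  · exact Or.inr (Or.inr (Or.inl chain7))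
  · exact Or.inr (Or.inr (Or.inr chain8))
  · exact Or.inl chain9
  · exact Or.inr (Or.inr (Or.inr chain10))
  · exact Or.inr (Or.inl chain11)
  · exact Or.inr (Or.inl chain12)
  · exact Or.inr (Or.inr (Or.inr chain13))
  · exact Or.inr (Or.inr (Or.inl chain14))
  · exact Or.inr (Or.inr (Or.inr chain15))
  · exact Or.inl chain16
  · exact Or.inr (Or.inl chain17)
  · exact Or.inl chain18
  · exact Or.inr (Or.inr (Or.inr chain19))
  · exact Or.inr (Or.inl chain20)
  · exact Or.inr (Or.inr (Or.inr chain21))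
  · exact Or.inr (Or.inl chain22)
  · exact Or.inr (Or.inr (Or.inl chain23))
/-! ### Part E2: classification of small signed words -/

lemma beqLetter_eq : (instBEqOfDecidableEq : BEq Letter) = instBEqProd := by
  have hfun : (@BEq.beq _ (instBEqOfDecidableEq : BEq Letter)) = @BEq.beq _ instBEqProd := by
    funext p q
    obtain ⟨a, s⟩ := p
    obtain ⟨b, t⟩ := q
    by_cases h : ((a, s) : Letter) = (b, t)
    · have h1 : a = b := congrArg Prod.fst h
      have h2 : s = t := congrArg Prod.snd h
      subst h1; subst h2
      show decide _ = _
      simp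
    · by_cases hab : a = b
      · have hst : s ≠ t := fun h' => h (by rw [hab, h'])
        show decide _ = _
        simp [h, hab, hst]
      · show decide _ = _
        simp [h, hab]
  exact congrArg BEq.mk hfun

lemma length_eq_two_mul {l : List Letter} (h : IsSignedWord l) :
    l.length = 2 * (lettersL l).card := by
  classical
  have h1 : ∑ p ∈ l.toFinset, l.count p = l.length := by
    have := Multiset.toFinset_sum_count_eq (l : Multiset Letter)
    rw [List.toFinset_coe, Multiset.coe_card] at this
    simp only [Multiset.coe_count] at this
    rwa [beqLetter_eq] at this
  have h2 : ∀ p ∈ l.toFinset, l.count p = 2 := fun p hp => (h p (List.mem_toFinset.mp hp)).1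
  have h3 : ∑ p ∈ l.toFinset, l.count p = 2 * l.toFinset.card := by
    rw [Finset.sum_congr rfl h2]
    simp [Finset.sum_const, mul_comm]
  have h4 : l.toFinset.card = (lettersL l).card := by
    apply Finset.card_bij (fun p _ => p.1)
    · intro p hp
      exact mem_lettersL.mpr ⟨p, List.mem_toFinset.mp hp, rfl⟩
    · intro p hp q hq hpq
      have := (h p (List.mem_toFinset.mp hp)).2 q (List.mem_toFinset.mp hq) hpq.symm
      obtain ⟨a, s⟩ := p; obtain ⟨b, t⟩ := q
      simp only at hpq this
      simp [hpq, this]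
    · intro a ha
      obtain ⟨p, hp, rfl⟩ := mem_lettersL.mp ha
      exact ⟨p, List.mem_toFinset.mpr hp, rfl⟩
  omega

lemma eq_wordEmpty {w : SignedWord} (h : w.numLetters = 0) : w = wordEmpty := by
  apply Subtype.ext
  have : w.1.length = 0 := by
    rw [length_eq_two_mul w.2]
    unfold SignedWord.numLetters SignedWord.letters at h
    omega
  exact List.length_eq_zero_iff.mp this

lemma one_letter_equiv {w : SignedWord} (h : w.numLetters = 1) :
    CyclicEquivL w.1 wordAA.1 := by
  obtain ⟨a, ha⟩ := Finset.card_eq_one.mp h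
  have hlen : w.1.length = 2 := by
    rw [length_eq_two_mul w.2]
    unfold SignedWord.numLetters SignedWord.letters at h
    omega
  obtain ⟨p, q, hw⟩ : ∃ p q, w.1 = [p, q] := by
    match hw : w.1, hlen with
    | [p, q], _ => exact ⟨p, q, rfl⟩
  have hp : p ∈ w.1 := by rw [hw]; simp
  have hq : q ∈ w.1 := by rw [hw]; simp
  have hqp : q.2 = p.2 := by
    apply (w.2 p hp).2 q hq
    have h1 := mem_lettersL.mpr ⟨p, hp, rfl⟩
    have h2 := mem_lettersL.mpr ⟨q, hq, rfl⟩
    rw [show lettersL w.1 = w.letters from rfl, ha, Finset.mem_singleton] at h1 h2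
    rw [h1, h2]
  have hq1 : q.1 = p.1 := by
    have h1 := mem_lettersL.mpr ⟨p, hp, rfl⟩
    have h2 := mem_lettersL.mpr ⟨q, hq, rfl⟩
    rw [show lettersL w.1 = w.letters from rfl, ha, Finset.mem_singleton] at h1 h2
    rw [h1, h2]
  obtain ⟨b, s⟩ := p
  obtain ⟨c, t⟩ := q
  simp only at hqp hq1
  rw [hw]
  have hst : (c, t) = (b, s) := by simp [hqp, hq1]
  rw [hst]
  have step1 : CyclicEquivL [((b : ℕ), s), (b, s)] [((0 : ℕ), s), (0, s)] := by
    refine Relation.EqvGen.rel _ _ (Or.inl ⟨Equiv.swap b 0, ?_⟩)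
    simp [Equiv.swap_apply_left]
  refine Relation.EqvGen.trans _ _ _ step1 ?_
  cases s
  · exact Relation.EqvGen.rel _ _ (Or.inr ⟨0, false, [], [], rfl, rfl⟩)
  · exact Relation.EqvGen.refl _

set_option maxRecDepth 20000 in
lemma two_letter_equiv {w : SignedWord} (h : w.numLetters = 2) :
    CyclicEquivL w.1 wordAABB.1 ∨ CyclicEquivL w.1 wordAABnBn.1 ∨
      CyclicEquivL w.1 wordABnBnA.1 ∨ CyclicEquivL w.1 wordABAB.1 := by
  obtain ⟨a, b, hab, hset⟩ := Finset.card_eq_two.mp h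
  set g : ℕ ≃ ℕ := Equiv.swap a 0 with hg
  have hgb : g b ≠ 0 := by
    intro hc
    refine hab (g.injective ?_).symm
    rw [hc]
    simp [hg]
  set f : ℕ ≃ ℕ := g.trans (Equiv.swap (g b) 1) with hf
  have hfa : f a = 0 := by
    simp only [hf, Equiv.trans_apply]
    have : g a = 0 := by simp [hg]
    rw [this]
    rw [Equiv.swap_apply_of_ne_of_ne (Ne.symm hgb) (by norm_num)]
  have hfb : f b = 1 := by
    simp only [hf, Equiv.trans_apply, Equiv.swap_apply_left]
  set l' := w.1.map fun p => ((f p.1 : ℕ), p.2) with hl'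
  have hiso : CyclicEquivL w.1 l' := Relation.EqvGen.rel _ _ (Or.inl ⟨f, rfl⟩)
  have hsw' : IsSignedWord l' := isSignedWord_map f w.2
  have hlen' : l'.length = 4 := by
    rw [hl', List.length_map, length_eq_two_mul w.2]
    unfold SignedWord.numLetters SignedWord.letters at h
    omega
  have hmem : ∀ p ∈ l', p.1 < 2 := by
    intro p hp
    obtain ⟨q, hq, rfl⟩ := List.mem_map.mp hp
    have hq1 : q.1 ∈ w.letters := mem_lettersL.mpr ⟨q, hq, rfl⟩
    rw [hset] at hq1
    rcases Finset.mem_insert.mp hq1 with hq1 | hq1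
    · rw [hq1]; simp [hfa]
    · rw [Finset.mem_singleton.mp hq1]; simp [hfb]
  obtain ⟨p1, p2, p3, p4, hl4⟩ : ∃ p1 p2 p3 p4, l' = [p1, p2, p3, p4] := by
    match hl4 : l', hlen' with
    | [p1, p2, p3, p4], _ => exact ⟨p1, p2, p3, p4, rfl⟩
  rw [hl4] at hmem hsw' hiso
  have hcanon : [p1, p2, p3, p4] ∈ canon24 := by
    have h1 := hmem p1 (by simp)
    have h2 := hmem p2 (by simp)
    have h3 := hmem p3 (by simp)
    have h4 := hmem p4 (by simp)
    have key : ∀ x : (Fin 2 × Bool) × (Fin 2 × Bool) × (Fin 2 × Bool) × (Fin 2 × Bool),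
        (∀ p ∈ [((x.1.1.val : ℕ), x.1.2), (x.2.1.1.val, x.2.1.2), (x.2.2.1.1.val, x.2.2.1.2),
            (x.2.2.2.1.val, x.2.2.2.2)],
          List.count p [((x.1.1.val : ℕ), x.1.2), (x.2.1.1.val, x.2.1.2),
            (x.2.2.1.1.val, x.2.2.1.2), (x.2.2.2.1.val, x.2.2.2.2)] = 2 ∧
          ∀ q ∈ [((x.1.1.val : ℕ), x.1.2), (x.2.1.1.val, x.2.1.2), (x.2.2.1.1.val, x.2.2.1.2),
            (x.2.2.2.1.val, x.2.2.2.2)], q.1 = p.1 → q.2 = p.2) →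
        [((x.1.1.val : ℕ), x.1.2), (x.2.1.1.val, x.2.1.2), (x.2.2.1.1.val, x.2.2.1.2),
          (x.2.2.2.1.val, x.2.2.2.2)] ∈ canon24 := by decide
    have := key ((⟨p1.1, h1⟩, p1.2), (⟨p2.1, h2⟩, p2.2), (⟨p3.1, h3⟩, p3.2), (⟨p4.1, h4⟩, p4.2))
    simpa using this hsw'
  rcases canon_chain _ hcanon with h' | h' | h' | h'
  · exact Or.inl (Relation.EqvGen.trans _ _ _ hiso h')
  · exact Or.inr (Or.inl (Relation.EqvGen.trans _ _ _ hiso h'))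
  · exact Or.inr (Or.inr (Or.inl (Relation.EqvGen.trans _ _ _ hiso h')))
  · exact Or.inr (Or.inr (Or.inr (Relation.EqvGen.trans _ _ _ hiso h')))
/-! ### Part F: injectivity and values -/

lemma mem_Vn {F : Type*} [Field F] {n : ℕ} {v : SignedWord → F} :
    v ∈ Vn F n ↔ FiniteTypeLe F n v := Iff.rfl

lemma vanish (F : Type*) [Field F] {v : SignedWord → F} (hv : FiniteTypeLe F 2 v)
    (h0 : v wordEmpty = 0) (h1 : v wordAA = 0) (h2 : v wordAABB = 0)
    (h3 : v wordAABnBn = 0) (h4 : v wordABnBnA = 0) (h5 : v wordABAB = 0) :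
    ∀ w, v w = 0 := by
  suffices H : ∀ n w, w.numLetters = n → v w = 0 from fun w => H _ w rfl
  intro n
  induction n using Nat.strong_induction_on with
  | _ n ih =>
    intro w hn
    match n, hn with
    | 0, hn => rw [eq_wordEmpty hn]; exact h0
    | 1, hn => rw [hv.1 w wordAA (one_letter_equiv hn)]; exact h1
    | 2, hn =>
      rcases two_letter_equiv hn with h' | h' | h' | h'
      · rw [hv.1 w wordAABB h']; exact h2
      · rw [hv.1 w wordAABnBn h']; exact h3
      · rw [hv.1 w wordABnBnA h']; exact h4
      · rw [hv.1 w wordABAB h']; exact h5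
    | (m + 3), hn =>
      have hp := hv.2 w w.letters (subset_refl _) (by rw [show w.letters.card = m + 3 from hn]; omega)
      unfold prolong at hp
      have hEmpty : ∅ ∈ w.letters.powerset := Finset.empty_mem_powerset _
      rw [← Finset.add_sum_erase _ (fun T => (-1 : F) ^ T.card * v (w.delete T)) hEmpty] at hp
      have hrest : ∀ T ∈ w.letters.powerset.erase ∅,
          (-1 : F) ^ T.card * v (w.delete T) = 0 := by
        intro T hT
        have hT' := Finset.mem_of_mem_erase hT
        rw [Finset.mem_powerset] at hT'
        have hTne : T ≠ ∅ := Finset.ne_of_mem_erase hT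
        have hTcard : 1 ≤ T.card := Finset.card_pos.mpr (Finset.nonempty_iff_ne_empty.mpr hTne)
        have hdel : (w.delete T).numLetters = (m + 3) - T.card := by
          unfold SignedWord.numLetters
          rw [letters_delete, Finset.card_sdiff_of_subset hT']
          rw [show w.letters.card = m + 3 from hn]
        have hTle : T.card ≤ m + 3 := by
          rw [← show w.letters.card = m + 3 from hn]
          exact Finset.card_le_card hT'
        rw [ih ((m + 3) - T.card) (by omega) _ hdel, mul_zero]
      rw [Finset.sum_eq_zero hrest, add_zero, Finset.card_empty, pow_zero, one_mul,
        delete_empty] at hp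
      exact hp

lemma restrict_letters (w : SignedWord) : w.restrict w.letters = w := by
  apply Subtype.ext
  show w.1.filter _ = w.1
  rw [List.filter_eq_self]
  intro p hp
  exact decide_eq_true (mem_lettersL.mpr ⟨p, hp, rfl⟩)

lemma Ncount_zero_of_lt {u w : SignedWord} (h : w.numLetters < u.numLetters) :
    Ncount u w = 0 := by
  classical
  unfold Ncount
  rw [Finset.card_eq_zero]
  rw [Finset.filter_eq_empty_iff]
  intro U hU
  rw [Finset.mem_powerset] at hU
  rintro ⟨hc, -⟩
  have hle := Finset.card_le_card hU
  unfold SignedWord.numLetters at h hc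
  omega

open Classical in
lemma Ncount_of_eq_card {u w : SignedWord} (h : u.numLetters = w.numLetters) :
    Ncount u w = if w.CyclicEquiv u then 1 else 0 := by
  unfold Ncount
  by_cases he : w.CyclicEquiv u
  · rw [if_pos he, Finset.card_eq_one]
    refine ⟨w.letters, ?_⟩
    ext U
    simp only [Finset.mem_filter, Finset.mem_powerset, Finset.mem_singleton]
    constructor
    · rintro ⟨hsub, hcard, -⟩
      apply Finset.eq_of_subset_of_card_le hsub
      rw [hcard, h]
      exact le_of_eq rfl
    · rintro rfl
      refine ⟨subset_refl _, h.symm, ?_⟩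
      rw [restrict_letters]; exact he
  · rw [if_neg he, Finset.card_eq_zero, Finset.filter_eq_empty_iff]
    intro U hU
    rw [Finset.mem_powerset] at hU
    rintro ⟨hcard, hequiv⟩
    have hUeq : U = w.letters := by
      apply Finset.eq_of_subset_of_card_le hU
      rw [hcard, h]
      exact le_of_eq rfl
    rw [hUeq, restrict_letters] at hequiv
    exact he hequiv

lemma Ncount_AA_two {w : SignedWord} (hlet : w.letters = {0, 1})
    (h0 : (w.restrict {0}).CyclicEquiv wordAA) (h1 : (w.restrict {1}).CyclicEquiv wordAA) :
    Ncount wordAA w = 2 := by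
  classical
  unfold Ncount
  have hfil : (w.letters.powerset.filter fun U =>
      U.card = wordAA.numLetters ∧ (w.restrict U).CyclicEquiv wordAA) =
      {({0} : Finset ℕ), {1}} := by
    ext U
    simp only [Finset.mem_filter, Finset.mem_powerset, Finset.mem_insert, Finset.mem_singleton]
    constructor
    · rintro ⟨hsub, hcard, _⟩
      rw [show wordAA.numLetters = 1 from rfl] at hcard
      obtain ⟨x, rfl⟩ := Finset.card_eq_one.mp hcard
      have : x ∈ ({0, 1} : Finset ℕ) := by
        rw [← hlet]
        exact hsub (Finset.mem_singleton_self x)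
      rcases Finset.mem_insert.mp this with rfl | hx
      · exact Or.inl rfl
      · exact Or.inr (by rw [Finset.mem_singleton.mp hx])
    · rintro (rfl | rfl)
      · exact ⟨by rw [hlet]; intro x hx; simp [Finset.mem_singleton.mp hx], rfl, h0⟩
      · exact ⟨by rw [hlet]; intro x hx; simp [Finset.mem_singleton.mp hx], rfl, h1⟩
  rw [hfil]
  rfl
/-! ### Part G: values and final assembly -/

lemma not_equiv_of_inv4 {w u : SignedWord} (h : inv4 w.1 ≠ inv4 u.1) (hlen : w.1.length = 4) :
    ¬ w.CyclicEquiv u := fun hc => h (inv4_of_equiv hc w.2 hlen)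

open Classical in
lemma ncount_diag (u : SignedWord) : Ncount u u = 1 := by
  rw [Ncount_of_eq_card rfl]
  exact if_pos (Relation.EqvGen.refl _)

-- values of Ncount wordAA
lemma nAA_empty : Ncount wordAA wordEmpty = 0 := Ncount_zero_of_lt (by decide)
lemma nAA_AA : Ncount wordAA wordAA = 1 := ncount_diag wordAA
lemma nAA_AABB : Ncount wordAA wordAABB = 2 :=
  Ncount_AA_two (by decide) (one_letter_equiv (by decide)) (one_letter_equiv (by decide))
lemma nAA_AABnBn : Ncount wordAA wordAABnBn = 2 :=
  Ncount_AA_two (by decide) (one_letter_equiv (by decide)) (one_letter_equiv (by decide))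
lemma nAA_ABnBnA : Ncount wordAA wordABnBnA = 2 :=
  Ncount_AA_two (by decide) (one_letter_equiv (by decide)) (one_letter_equiv (by decide))
lemma nAA_ABAB : Ncount wordAA wordABAB = 2 :=
  Ncount_AA_two (by decide) (one_letter_equiv (by decide)) (one_letter_equiv (by decide))

open Classical in
lemma ncount_offdiag {u w : SignedWord} (hnum : u.numLetters = w.numLetters)
    (h : inv4 w.1 ≠ inv4 u.1) (hlen : w.1.length = 4) : Ncount u w = 0 := by
  rw [Ncount_of_eq_card hnum, if_neg (not_equiv_of_inv4 h hlen)]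

-- values of Ncount of the four 2-letter representatives
lemma n2_empty (u : SignedWord) (hu : u.numLetters = 2) : Ncount u wordEmpty = 0 :=
  Ncount_zero_of_lt (by rw [hu]; decide)
lemma n2_AA (u : SignedWord) (hu : u.numLetters = 2) : Ncount u wordAA = 0 :=
  Ncount_zero_of_lt (by rw [hu]; decide)

lemma nAABB_AABnBn : Ncount wordAABB wordAABnBn = 0 := ncount_offdiag rfl (by decide) rfl
lemma nAABB_ABnBnA : Ncount wordAABB wordABnBnA = 0 := ncount_offdiag rfl (by decide) rfl
lemma nAABB_ABAB : Ncount wordAABB wordABAB = 0 := ncount_offdiag rfl (by decide) rfl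
lemma nAABnBn_AABB : Ncount wordAABnBn wordAABB = 0 := ncount_offdiag rfl (by decide) rfl
lemma nAABnBn_ABnBnA : Ncount wordAABnBn wordABnBnA = 0 := ncount_offdiag rfl (by decide) rfl
lemma nAABnBn_ABAB : Ncount wordAABnBn wordABAB = 0 := ncount_offdiag rfl (by decide) rfl
lemma nABnBnA_AABB : Ncount wordABnBnA wordAABB = 0 := ncount_offdiag rfl (by decide) rfl
lemma nABnBnA_AABnBn : Ncount wordABnBnA wordAABnBn = 0 := ncount_offdiag rfl (by decide) rfl
lemma nABnBnA_ABAB : Ncount wordABnBnA wordABAB = 0 := ncount_offdiag rfl (by decide) rfl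
lemma nABAB_AABB : Ncount wordABAB wordAABB = 0 := ncount_offdiag rfl (by decide) rfl
lemma nABAB_AABnBn : Ncount wordABAB wordAABnBn = 0 := ncount_offdiag rfl (by decide) rfl
lemma nABAB_ABnBnA : Ncount wordABAB wordABnBnA = 0 := ncount_offdiag rfl (by decide) rfl

lemma const_mem_Vn (F : Type*) [Field F] : (fun _ => (1 : F)) ∈ Vn F 2 := by
  refine ⟨fun w w' _ => rfl, fun w S hS hc => ?_⟩
  unfold prolong
  simp only [mul_one]
  rw [sum_pow_neg_one]
  have hne : S ≠ ∅ := by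
    intro h
    rw [h] at hc
    simp at hc
  rw [if_neg hne]

lemma ncount_mem_Vn (F : Type*) [Field F] (u : SignedWord) (hu : u.numLetters ≤ 2) :
    (fun w => (Ncount u w : F)) ∈ Vn F 2 :=
  ⟨Ncount_invariant u F, fun w S hS hc => Ncount_degree F u w S hS (lt_of_le_of_lt hu hc)⟩

def reps6 : Fin 6 → SignedWord := ![wordEmpty, wordAA, wordAABB, wordAABnBn, wordABnBnA, wordABAB]

def evMap (F : Type*) [Field F] : Vn F 2 →ₗ[F] (Fin 6 → F) where
  toFun v i := (v : SignedWord → F) (reps6 i)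
  map_add' v w := rfl
  map_smul' c v := rfl

lemma evMap_ker (F : Type*) [Field F] : ∀ v : Vn F 2, evMap F v = 0 → v = 0 := by
  intro v hv0
  have h6 : ∀ i : Fin 6, (v : SignedWord → F) (reps6 i) = 0 := fun i => congrFun hv0 i
  apply Subtype.ext
  funext w
  exact vanish F (mem_Vn.mp v.2) (h6 0) (h6 1) (h6 2) (h6 3) (h6 4) (h6 5) w

lemma evMap_surjective (F : Type*) [Field F] : Function.Surjective (evMap F) := by
  intro t
  set u0 : SignedWord → F := fun _ => 1 with hu0
  set u1 : SignedWord → F := fun w => (Ncount wordAA w : F) with hu1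
  set u2 : SignedWord → F := fun w => (Ncount wordAABB w : F) with hu2
  set u3 : SignedWord → F := fun w => (Ncount wordAABnBn w : F) with hu3
  set u4 : SignedWord → F := fun w => (Ncount wordABnBnA w : F) with hu4
  set u5 : SignedWord → F := fun w => (Ncount wordABAB w : F) with hu5
  set c0 : F := t 0 with hc0
  set c1 : F := t 1 - t 0 with hc1
  set c2 : F := t 2 - 2 * t 1 + t 0 with hc2
  set c3 : F := t 3 - 2 * t 1 + t 0 with hc3
  set c4 : F := t 4 - 2 * t 1 + t 0 with hc4
  set c5 : F := t 5 - 2 * t 1 + t 0 with hc5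
  have hmem : c0 • u0 + c1 • u1 + c2 • u2 + c3 • u3 + c4 • u4 + c5 • u5 ∈ Vn F 2 := by
    refine Submodule.add_mem _ (Submodule.add_mem _ (Submodule.add_mem _ (Submodule.add_mem _
      (Submodule.add_mem _ ?_ ?_) ?_) ?_) ?_) ?_
    · exact Submodule.smul_mem _ _ (const_mem_Vn F)
    · exact Submodule.smul_mem _ _ (ncount_mem_Vn F wordAA (by decide))
    · exact Submodule.smul_mem _ _ (ncount_mem_Vn F wordAABB (by decide))
    · exact Submodule.smul_mem _ _ (ncount_mem_Vn F wordAABnBn (by decide))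
    · exact Submodule.smul_mem _ _ (ncount_mem_Vn F wordABnBnA (by decide))
    · exact Submodule.smul_mem _ _ (ncount_mem_Vn F wordABAB (by decide))
  refine ⟨⟨_, hmem⟩, ?_⟩
  funext i
  fin_cases i
  · show (c0 • u0 + c1 • u1 + c2 • u2 + c3 • u3 + c4 • u4 + c5 • u5) wordEmpty = t 0
    simp only [Pi.add_apply, Pi.smul_apply, smul_eq_mul, hu0, hu1, hu2, hu3, hu4, hu5,
      nAA_empty, n2_empty wordAABB rfl, n2_empty wordAABnBn rfl, n2_empty wordABnBnA rfl,
      n2_empty wordABAB rfl, hc0, hc1, hc2, hc3, hc4, hc5]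
    push_cast
    ring
  · show (c0 • u0 + c1 • u1 + c2 • u2 + c3 • u3 + c4 • u4 + c5 • u5) wordAA = t 1
    simp only [Pi.add_apply, Pi.smul_apply, smul_eq_mul, hu0, hu1, hu2, hu3, hu4, hu5,
      nAA_AA, n2_AA wordAABB rfl, n2_AA wordAABnBn rfl, n2_AA wordABnBnA rfl,
      n2_AA wordABAB rfl, hc0, hc1, hc2, hc3, hc4, hc5]
    push_cast
    ring
  · show (c0 • u0 + c1 • u1 + c2 • u2 + c3 • u3 + c4 • u4 + c5 • u5) wordAABB = t 2
    simp only [Pi.add_apply, Pi.smul_apply, smul_eq_mul, hu0, hu1, hu2, hu3, hu4, hu5,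
      nAA_AABB, ncount_diag, nAABnBn_AABB, nABnBnA_AABB, nABAB_AABB,
      hc0, hc1, hc2, hc3, hc4, hc5]
    push_cast
    ring
  · show (c0 • u0 + c1 • u1 + c2 • u2 + c3 • u3 + c4 • u4 + c5 • u5) wordAABnBn = t 3
    simp only [Pi.add_apply, Pi.smul_apply, smul_eq_mul, hu0, hu1, hu2, hu3, hu4, hu5,
      nAA_AABnBn, ncount_diag, nAABB_AABnBn, nABnBnA_AABnBn, nABAB_AABnBn,
      hc0, hc1, hc2, hc3, hc4, hc5]
    push_cast
    ring
  · show (c0 • u0 + c1 • u1 + c2 • u2 + c3 • u3 + c4 • u4 + c5 • u5) wordABnBnA = t 4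
    simp only [Pi.add_apply, Pi.smul_apply, smul_eq_mul, hu0, hu1, hu2, hu3, hu4, hu5,
      nAA_ABnBnA, ncount_diag, nAABB_ABnBnA, nAABnBn_ABnBnA, nABAB_ABnBnA,
      hc0, hc1, hc2, hc3, hc4, hc5]
    push_cast
    ring
  · show (c0 • u0 + c1 • u1 + c2 • u2 + c3 • u3 + c4 • u4 + c5 • u5) wordABAB = t 5
    simp only [Pi.add_apply, Pi.smul_apply, smul_eq_mul, hu0, hu1, hu2, hu3, hu4, hu5,
      nAA_ABAB, ncount_diag, nAABB_ABAB, nAABnBn_ABAB, nABnBnA_ABAB,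
      hc0, hc1, hc2, hc3, hc4, hc5]
    push_cast
    ring
/-- `dim V₂ = 6`. -/
theorem V2_dim_eq_six (F : Type*) [Field F] [CharZero F] :
    Module.finrank F (Vn F 2) = 6 := by
  have hinj : Function.Injective (evMap F) := by
    rw [← LinearMap.ker_eq_bot, LinearMap.ker_eq_bot']
    intro v hv
    exact evMap_ker F v hv
  have e : (Vn F 2) ≃ₗ[F] (Fin 6 → F) :=
    LinearEquiv.ofBijective (evMap F) ⟨hinj, evMap_surjective F⟩
  rw [e.finrank_eq]
  exact Module.finrank_fin_fun F
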